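/- Let L be a linear subspace of ℝ^n and L^⊥ its orthogonal complement. Then L ∩ ℝ^n_+ = {0} if and only if L^⊥ ∩ ℝ^n_{++} ≠ ∅, i.e., the only nonnegative vector in L is zero if and only if L^⊥ contains a vector with all entries strictly positive. -/

import Mathlib

noncomputable section

/-- The orthogonal complement `L^⊥ = {s : ⟨s,x⟩ = 0 for all x ∈ L}`. -/
def perpSet {n : ℕ} (L : Set (Fin n → ℝ)) : Set (Fin n → ℝ) :=
  {s | ∀ x ∈ L, ∑ j, s j * x j = 0}

lemma repr_sum {n : ℕ} (f : (Fin n → ℝ) →L[ℝ] ℝ) (x : Fin n → ℝ) :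
    f x = ∑ j, x j * f (Pi.single j 1) := by
  have hx : x = ∑ j, x j • (Pi.single j 1 : Fin n → ℝ) := by
    have : ∀ j, x j • (Pi.single j 1 : Fin n → ℝ) = Pi.single j (x j) := by
      intro j
      ext i
      by_cases hi : i = j <;> simp [Pi.single_apply, hi]
    simp_rw [this]
    exact (Finset.univ_sum_single x).symm
  conv_lhs => rw [hx]
  rw [map_sum]
  simp [smul_eq_mul]

/-- `L ∩ ℝⁿ₊ = {0}` if and only if `L^⊥ ∩ ℝⁿ₊₊ ≠ ∅`. -/
theorem inter_nonneg_eq_zero_iff_perp_pos {n : ℕ} (L : Submodule ℝ (Fin n → ℝ)) :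
    {x : Fin n → ℝ | x ∈ L ∧ ∀ k, 0 ≤ x k} = {0} ↔
      ∃ s ∈ perpSet (L : Set (Fin n → ℝ)), ∀ k, 0 < s k := by
  constructor
  · intro h
    -- separate L from the standard simplex
    have hdisj : Disjoint (L : Set (Fin n → ℝ)) (stdSimplex ℝ (Fin n)) := by
      rw [Set.disjoint_left]
      intro x hxL hxS
      have hx0 : x = 0 := by
        have : x ∈ {x : Fin n → ℝ | x ∈ L ∧ ∀ k, 0 ≤ x k} := ⟨hxL, hxS.1⟩
        rw [h] at this; exact this
      have := hxS.2
      rw [hx0] at this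
      simp at this
    obtain ⟨f, u, v, hfu, huv, hfv⟩ :=
      geometric_hahn_banach_closed_compact (L.convex) (L.closed_of_finiteDimensional)
        (convex_stdSimplex ℝ _) (isCompact_stdSimplex ℝ _) hdisj
    -- f vanishes on L
    have hfL : ∀ x ∈ L, f x = 0 := by
      intro x hx
      by_contra hne
      rcases lt_or_gt_of_ne hne with hlt | hgt
      · -- f x < 0 : scale by negative
        have : ∀ c : ℝ, c * f x < u := fun c => by
          have := hfu (c • x) (L.smul_mem c hx)
          simpa using this
        have h1 := this ((u + 1) / f x)
        rw [div_mul_cancel₀ _ (ne_of_lt hlt)] at h1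
        linarith
      · have : ∀ c : ℝ, c * f x < u := fun c => by
          have := hfu (c • x) (L.smul_mem c hx)
          simpa using this
        have h1 := this ((u + 1) / f x)
        rw [div_mul_cancel₀ _ (ne_of_gt hgt)] at h1
        linarith
    have hu0 : 0 < u := by
      have := hfu 0 L.zero_mem
      simpa using this
    refine ⟨fun j => f (Pi.single j 1), ?_, ?_⟩
    · intro x hx
      have := hfL x hx
      rw [repr_sum f x] at this
      rw [← this]
      exact Finset.sum_congr rfl fun j _ => mul_comm _ _
    · intro k
      have hk : Pi.single k (1 : ℝ) ∈ stdSimplex ℝ (Fin n) := by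
        constructor
        · intro j
          by_cases hj : j = k <;> simp [Pi.single_apply, hj]
        · simp
      have := hfv _ hk
      linarith
  · rintro ⟨s, hs, hpos⟩
    ext x
    simp only [Set.mem_setOf_eq, Set.mem_singleton_iff]
    constructor
    · rintro ⟨hxL, hxk⟩
      have hsum := hs x hxL
      have hzero : ∀ j ∈ Finset.univ, s j * x j = 0 := by
        intro j _
        have := Finset.sum_eq_zero_iff_of_nonneg
          (fun j _ => mul_nonneg (hpos j).le (hxk j)) |>.mp hsum
        exact this j (Finset.mem_univ j)
      funext j
      have := hzero j (Finset.mem_univ j)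
      have hsj := (hpos j).ne'
      have : x j = 0 := by
        rcases mul_eq_zero.mp this with h | h
        · exact absurd h hsj
        · exact h
      simpa using this
    · rintro rfl
      exact ⟨L.zero_mem, fun k => le_refl 0⟩

end
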